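/- Surjectivity of the moment map: Let Y be a finite set, a a strictly positive probability distribution on Y, and φ : Y → ℝ^d. For every μ in the interior of conv(φ(Y)), there exists λ* ∈ ℝ^d such that μ_{λ*} = μ, where μ_λ = Σ_y p_λ(y) φ(y). -/

import Mathlib

open Finset Real

noncomputable section

variable {d : ℕ} {Y : Type*} [Fintype Y]

/-- Dot product on `ℝ^d`. -/
def dotp (x y : Fin d → ℝ) : ℝ := ∑ i, x i * y i

/-- Partition function `Z_λ`. -/
def Zf (a : Y → ℝ) (φ : Y → Fin d → ℝ) (l : Fin d → ℝ) : ℝ :=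
  ∑ y, a y * Real.exp (dotp l (φ y))

/-- Log-partition function `A(λ)`. -/
def Af (a : Y → ℝ) (φ : Y → Fin d → ℝ) (l : Fin d → ℝ) : ℝ := Real.log (Zf a φ l)

/-- Exponential family member `p_λ`. -/
def pf (a : Y → ℝ) (φ : Y → Fin d → ℝ) (l : Fin d → ℝ) (y : Y) : ℝ :=
  a y * Real.exp (dotp l (φ y)) / Zf a φ l

/-- KL divergence on a finite set (convention `0 log 0 = 0` holds since `0 * x = 0`). -/
def KL (q p : Y → ℝ) : ℝ := ∑ y, q y * Real.log (q y / p y)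

/-- Mean of the sufficient statistic `μ_q`. -/
def mu (φ : Y → Fin d → ℝ) (q : Y → ℝ) : Fin d → ℝ := fun i => ∑ y, q y * φ y i

lemma dotp_add_left (x y z : Fin d → ℝ) : dotp (x + y) z = dotp x z + dotp y z := by
  simp [dotp, add_mul, Finset.sum_add_distrib]

lemma dotp_add_right (x y z : Fin d → ℝ) : dotp x (y + z) = dotp x y + dotp x z := by
  simp [dotp, mul_add, Finset.sum_add_distrib]

lemma dotp_smul_right (c : ℝ) (x y : Fin d → ℝ) : dotp x (c • y) = c * dotp x y := by
  unfold dotp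
  rw [Finset.mul_sum]
  refine Finset.sum_congr rfl fun j _ => ?_
  simp [Pi.smul_apply]
  ring

lemma dotp_single_left (t : ℝ) (i : Fin d) (x : Fin d → ℝ) :
    dotp (t • (Pi.single i 1 : Fin d → ℝ)) x = t * x i := by
  rw [dotp, Finset.sum_eq_single i]
  · simp
  · intro j _ hj; simp [Pi.single_apply, hj]
  · simp

lemma dotp_linear (l : Fin d → ℝ) : IsLinearMap ℝ (fun z : Fin d → ℝ => dotp l z) := by
  constructor
  · intro x y; exact dotp_add_right l x y
  · intro c x; exact dotp_smul_right c l x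

lemma sqrt_dotp_ge (l : Fin d → ℝ) (i : Fin d) : |l i| ≤ Real.sqrt (dotp l l) := by
  rw [← Real.sqrt_sq_eq_abs]
  apply Real.sqrt_le_sqrt
  rw [sq]
  exact Finset.single_le_sum (f := fun j => l j * l j) (fun j _ => mul_self_nonneg _)
    (Finset.mem_univ i)

theorem moment_map_surjective (a : Y → ℝ) (ha : ∀ y, 0 < a y) (ha1 : ∑ y, a y = 1)
    (φ : Y → Fin d → ℝ) (μ : Fin d → ℝ)
    (hμ : μ ∈ interior (convexHull ℝ (Set.range φ))) :
    ∃ l : Fin d → ℝ, mu φ (pf a φ l) = μ := by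
  -- Y is nonempty
  have hY : Nonempty Y := by
    by_contra h
    rw [not_nonempty_iff] at h
    have : Set.range φ = ∅ := Set.range_eq_empty φ
    rw [this, convexHull_empty, interior_empty] at hμ
    exact hμ
  -- positivity of Z
  have hZpos : ∀ l : Fin d → ℝ, 0 < Zf a φ l := fun l =>
    Finset.sum_pos (fun y _ => mul_pos (ha y) (Real.exp_pos _)) Finset.univ_nonempty
  -- ε-ball around μ inside hull
  obtain ⟨ε, hε, hball⟩ : ∃ ε > 0, Metric.closedBall μ ε ⊆ convexHull ℝ (Set.range φ) := by
    rcases Metric.mem_nhds_iff.mp (mem_interior_iff_mem_nhds.mp hμ) with ⟨δ, hδ, hsub⟩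
    exact ⟨δ / 2, by positivity, fun x hx =>
      hsub (lt_of_le_of_lt (Metric.mem_closedBall.mp hx) (by linarith))⟩
  -- key: linear functional bound
  have key : ∀ l : Fin d → ℝ, ∃ y : Y,
      dotp l μ + ε * Real.sqrt (dotp l l) ≤ dotp l (φ y) := by
    intro l
    set n := Real.sqrt (dotp l l) with hn
    have hn0 : 0 ≤ n := Real.sqrt_nonneg _
    set x := μ + (ε / n) • l with hx
    have hxmem : x ∈ convexHull ℝ (Set.range φ) := by
      rcases eq_or_lt_of_le hn0 with h0 | hpos
      · -- n = 0 ⇒ l = 0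
        have hll : dotp l l = 0 := by
          have hle : dotp l l ≤ 0 := Real.sqrt_eq_zero'.mp h0.symm
          exact le_antisymm hle (Finset.sum_nonneg fun j _ => mul_self_nonneg _)
        have hl0 : l = 0 := by
          funext i
          have h1 : l i * l i = 0 := by
            have hnn : ∀ j ∈ Finset.univ, (0:ℝ) ≤ l j * l j := fun j _ => mul_self_nonneg _
            exact (Finset.sum_eq_zero_iff_of_nonneg hnn).mp hll i (Finset.mem_univ i)
          exact mul_self_eq_zero.mp h1
        rw [hx, hl0]
        simp only [smul_zero, add_zero]
        exact hball (Metric.mem_closedBall_self (le_of_lt hε))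
      · apply hball
        rw [Metric.mem_closedBall, hx]
        have : μ + (ε / n) • l - μ = (ε / n) • l := by abel
        rw [dist_eq_norm, this, norm_smul]
        have hln : ‖l‖ ≤ n := by
          rw [pi_norm_le_iff_of_nonneg hn0]
          intro i
          exact sqrt_dotp_ge l i
        have : ‖(ε / n : ℝ)‖ = ε / n := by
          rw [Real.norm_eq_abs, abs_of_nonneg]; positivity
        rw [this]
        calc ε / n * ‖l‖ ≤ ε / n * n := by
              apply mul_le_mul_of_nonneg_left hln; positivity
          _ = ε := by field_simp
    -- supremum over hull is attained at some φ y
    set M := Finset.univ.sup' (Finset.univ_nonempty (α := Y)) (fun y => dotp l (φ y)) with hM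
    have hhull : convexHull ℝ (Set.range φ) ⊆ {z | dotp l z ≤ M} := by
      apply convexHull_min
      · rintro z ⟨y, rfl⟩
        exact Finset.le_sup' (fun y => dotp l (φ y)) (Finset.mem_univ y)
      · exact convex_halfSpace_le (dotp_linear l) M
    obtain ⟨y, _, hy⟩ := Finset.exists_mem_eq_sup' (Finset.univ_nonempty (α := Y))
      (fun y => dotp l (φ y))
    refine ⟨y, ?_⟩
    have hxle : dotp l x ≤ M := hhull hxmem
    rw [hM, hy] at hxle
    refine le_trans ?_ hxle
    rw [hx, dotp_add_right, dotp_smul_right]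
    rcases eq_or_lt_of_le hn0 with h0 | hpos
    · rw [← h0]; simp
    · have : dotp l l = n * n := (Real.mul_self_sqrt (by
        refine Finset.sum_nonneg fun j _ => mul_self_nonneg _)).symm
      rw [this]
      have : ε / n * (n * n) = ε * n := by field_simp
      rw [this]
  -- the function to minimize
  set f : (Fin d → ℝ) → ℝ := fun l => Af a φ l - dotp l μ with hf
  -- lower bound
  have amin_pos : 0 < Finset.univ.inf' Finset.univ_nonempty a := by
    rw [Finset.lt_inf'_iff]
    exact fun y _ => ha y
  set c := Real.log (Finset.univ.inf' Finset.univ_nonempty a) with hc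
  have flb : ∀ l, c + ε * ‖l‖ ≤ f l := by
    intro l
    obtain ⟨y, hy⟩ := key l
    have hZge : Finset.univ.inf' Finset.univ_nonempty a * Real.exp (dotp l (φ y)) ≤ Zf a φ l := by
      refine le_trans ?_ (Finset.single_le_sum (f := fun y => a y * Real.exp (dotp l (φ y)))
        (fun y _ => le_of_lt (mul_pos (ha y) (Real.exp_pos _))) (Finset.mem_univ y))
      exact mul_le_mul_of_nonneg_right (Finset.inf'_le a (Finset.mem_univ y)) (Real.exp_pos _).le
    have hlog : c + dotp l (φ y) ≤ Af a φ l := by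
      rw [hf] at *
      calc c + dotp l (φ y)
          = Real.log (Finset.univ.inf' Finset.univ_nonempty a * Real.exp (dotp l (φ y))) := by
            rw [Real.log_mul (ne_of_gt amin_pos) (Real.exp_ne_zero _), Real.log_exp]
        _ ≤ Af a φ l := Real.log_le_log (mul_pos amin_pos (Real.exp_pos _)) hZge
    have hnorm : ‖l‖ ≤ Real.sqrt (dotp l l) := by
      rw [pi_norm_le_iff_of_nonneg (Real.sqrt_nonneg _)]
      exact fun i => sqrt_dotp_ge l i
    have : c + dotp l μ + ε * ‖l‖ ≤ c + dotp l (φ y) := by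
      have := mul_le_mul_of_nonneg_left hnorm (le_of_lt hε)
      linarith
    simp only [hf]
    linarith
  -- continuity of f
  have hZcont : Continuous (fun l => Zf a φ l) := by
    apply continuous_finset_sum
    intro y _
    apply Continuous.mul continuous_const
    apply Real.continuous_exp.comp
    apply continuous_finset_sum
    intro i _
    exact (continuous_apply i).mul continuous_const
  have hfcont : Continuous f := by
    apply Continuous.sub
    · exact Continuous.log hZcont (fun l => ne_of_gt (hZpos l))
    · apply continuous_finset_sum
      intro i _
      exact (continuous_apply i).mul continuous_const
  -- coercivity
  have hcoer : Filter.Tendsto f (Filter.cocompact (Fin d → ℝ)) Filter.atTop := by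
    apply Filter.tendsto_atTop_mono flb
    exact Filter.tendsto_atTop_add_const_left _ c
      ((tendsto_norm_cocompact_atTop).const_mul_atTop hε)
  obtain ⟨l, hl⟩ := hfcont.exists_forall_le hcoer
  refine ⟨l, ?_⟩
  funext i
  -- derivative along e_i at the minimum
  set e : Fin d → ℝ := Pi.single i 1 with he
  have hdir : ∀ (t : ℝ) (x : Fin d → ℝ), dotp (l + t • e) x = dotp l x + t * x i := by
    intro t x
    rw [dotp_add_left, dotp_single_left]
  set g : ℝ → ℝ := fun t => f (l + t • e) with hg
  set Z' : ℝ := ∑ y, a y * φ y i * Real.exp (dotp l (φ y)) with hZ'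
  have hZt : ∀ t, Zf a φ (l + t • e) = ∑ y, a y * Real.exp (dotp l (φ y) + t * φ y i) := by
    intro t
    unfold Zf
    congr 1; funext y; rw [hdir]
  have hgD : HasDerivAt g (Z' / Zf a φ l - μ i) 0 := by
    have hZd : HasDerivAt (fun t : ℝ => Zf a φ (l + t • e)) Z' 0 := by
      have hsum : HasDerivAt (fun t : ℝ => ∑ y, a y * Real.exp (dotp l (φ y) + t * φ y i))
          (∑ y, a y * (φ y i * Real.exp (dotp l (φ y) + 0 * φ y i))) 0 := by
        refine HasDerivAt.fun_sum fun y _ => ?_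
        refine HasDerivAt.const_mul (a y) ?_
        have h1 : HasDerivAt (fun t : ℝ => dotp l (φ y) + t * φ y i) (φ y i) 0 := by
          simpa using HasDerivAt.const_add (dotp l (φ y))
            ((hasDerivAt_id (0:ℝ)).mul_const (φ y i))
        simpa [mul_comm] using h1.exp
      have hsum' : HasDerivAt (fun t : ℝ => ∑ y, a y * Real.exp (dotp l (φ y) + t * φ y i)) Z' 0 := by
        simpa [hZ', mul_assoc] using hsum
      exact hsum'.congr_of_eventuallyEq (Filter.Eventually.of_forall fun t => hZt t)
    have hlog : HasDerivAt (fun t : ℝ => Af a φ (l + t • e)) (Z' / Zf a φ l) 0 := by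
      have h0 : l + (0:ℝ) • e = l := by simp
      have hne : Zf a φ (l + (0:ℝ) • e) ≠ 0 := by rw [h0]; exact ne_of_gt (hZpos l)
      have hld := hZd.log hne
      rw [h0] at hld
      exact hld
    have hlin : HasDerivAt (fun t : ℝ => dotp (l + t • e) μ) (μ i) 0 := by
      have : (fun t : ℝ => dotp (l + t • e) μ) = fun t => dotp l μ + t * μ i := by
        funext t; rw [hdir]
      rw [this]
      simpa using HasDerivAt.const_add (dotp l μ) ((hasDerivAt_id (0:ℝ)).mul_const (μ i))
    exact hlog.sub hlin
  have hmin : IsLocalMin g 0 := by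
    apply Filter.Eventually.of_forall
    intro t
    have : g 0 = f l := by simp [hg]
    rw [this]
    exact hl _
  have hD0 : Z' / Zf a φ l - μ i = 0 := hmin.hasDerivAt_eq_zero hgD
  have : mu φ (pf a φ l) i = Z' / Zf a φ l := by
    unfold mu pf
    rw [hZ', Finset.sum_div]
    congr 1; funext y; ring
  rw [this]
  linarith
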